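/- arXiv:1712.05707 — 2 statements merged into one kernel-verified Lean document; each statement's English description precedes it below -/
import Mathlib

section
/- For n ≥ 2 and (s₁,…,s_{n-1},p) ∈ ℂⁿ, the point (s₁,…,s_{n-1},p) belongs to Γₙ if and only if |p| ≤ 1 and there exists (c₁,…,c_{n-1}) ∈ Γ_{n-1} such that sᵢ = cᵢ + conj(c_{n-i})·p for every i = 1,…,n-1. -/
open Finset

/-- The `k`-th elementary symmetric polynomial of `z₁, …, zₙ`. -/
noncomputable def esymC (n k : ℕ) (z : Fin n → ℂ) : ℂ :=
  ∑ t ∈ Finset.powersetCard k (Finset.univ : Finset (Fin n)), ∏ j ∈ t, z j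

/-- The symmetrization map `πₙ(z) = (e₁(z), …, eₙ(z))`. -/
noncomputable def symMap (n : ℕ) (z : Fin n → ℂ) : Fin n → ℂ :=
  fun k => esymC n (k.1 + 1) z

/-- The closed symmetrized polydisc `Γₙ`. -/
noncomputable def closedSymPolydisc (n : ℕ) : Set (Fin n → ℂ) :=
  {x | ∃ z : Fin n → ℂ, (∀ j, ‖z j‖ ≤ 1) ∧ symMap n z = x}

open Polynomial


lemma esymC_zero (n : ℕ) (z : Fin n → ℂ) : esymC n 0 z = 1 := by
  simp [esymC]

lemma esymC_top (n : ℕ) (z : Fin n → ℂ) : esymC n n z = ∏ j, z j := by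
  have h : Finset.powersetCard n (Finset.univ : Finset (Fin n)) = {Finset.univ} := by
    have := Finset.powersetCard_self (Finset.univ : Finset (Fin n))
    simpa using this
  unfold esymC
  rw [h, Finset.sum_singleton]

lemma esymC_neg (n k : ℕ) (z : Fin n → ℂ) :
    esymC n k (fun j => -z j) = (-1)^k * esymC n k z := by
  unfold esymC
  rw [Finset.mul_sum]
  refine Finset.sum_congr rfl fun t ht => ?_
  rw [Finset.mem_powersetCard_univ] at ht
  calc ∏ j ∈ t, (fun j => -z j) j = ∏ j ∈ t, ((-1) * z j) := by
        refine Finset.prod_congr rfl fun j _ => by ring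
    _ = (-1)^k * ∏ j ∈ t, z j := by rw [Finset.prod_mul_distrib, Finset.prod_const, ht]

lemma esymC_conj (n k : ℕ) (z : Fin n → ℂ) :
    esymC n k (fun j => (starRingEnd ℂ) (z j)) = (starRingEnd ℂ) (esymC n k z) := by
  unfold esymC
  rw [map_sum]
  exact Finset.sum_congr rfl fun t _ => by rw [map_prod]

-- coeff of ∏ (X + C a j)
lemma coeff_prod_X_add_C (n : ℕ) (a : Fin n → ℂ) (k : ℕ) (hk : k ≤ n) :
    (∏ j, (X + C (a j))).coeff (n - k) = esymC n k a := by
  have h : ∏ j : Fin n, (X + C (a j)) = ∏ j : Fin n, (C (a j) + X) := by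
    refine Finset.prod_congr rfl fun j _ => by ring
  rw [h, Finset.prod_add]
  simp only [Finset.prod_const, finset_sum_coeff]
  have hcoeff : ∀ t ∈ (Finset.univ : Finset (Fin n)).powerset,
      ((∏ i ∈ t, C (a i)) * X ^ (Finset.univ \ t).card).coeff (n - k)
        = if t.card = k then ∏ i ∈ t, a i else 0 := by
    intro t ht
    rw [← map_prod, coeff_C_mul, coeff_X_pow]
    have htc : t.card ≤ n := by
      simpa using Finset.card_le_card (Finset.mem_powerset.mp ht)
    have hsd : (Finset.univ \ t).card = n - t.card := by
      rw [Finset.card_sdiff_of_subset (Finset.subset_univ t)]; simp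
    rw [hsd]
    by_cases h1 : t.card = k
    · simp [h1]
    · have : ¬ (n - k = n - t.card) := by omega
      simp [this, h1]
  rw [Finset.sum_congr rfl hcoeff, ← Finset.sum_filter, esymC, Finset.powersetCard_eq_filter]

-- coeff of ∏ (C a j * X + 1)
lemma coeff_prod_C_mul_X_add_one (n : ℕ) (a : Fin n → ℂ) (k : ℕ) :
    (∏ j, (C (a j) * X + 1)).coeff k = esymC n k a := by
  rw [Finset.prod_add]
  simp only [Finset.prod_const_one, mul_one, finset_sum_coeff]
  have hcoeff : ∀ t ∈ (Finset.univ : Finset (Fin n)).powerset,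
      (∏ i ∈ t, (C (a i) * X)).coeff k = if t.card = k then ∏ i ∈ t, a i else 0 := by
    intro t _
    rw [Finset.prod_mul_distrib, Finset.prod_const, ← map_prod, coeff_C_mul, coeff_X_pow]
    by_cases h1 : t.card = k
    · simp [h1]
    · simp [h1, Ne.symm h1]
  rw [Finset.sum_congr rfl hcoeff, ← Finset.sum_filter, esymC, Finset.powersetCard_eq_filter]


lemma key_normSq (w v : ℂ) :
    Complex.normSq (w - v) - Complex.normSq (1 - (starRingEnd ℂ) v * w)
      = (Complex.normSq w - 1) * (1 - Complex.normSq v) := by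
  simp only [Complex.normSq_apply, Complex.sub_re, Complex.sub_im, Complex.mul_re,
    Complex.mul_im, Complex.conj_re, Complex.conj_im, Complex.one_re, Complex.one_im]
  ring

lemma abs_one_sub_conj_mul_le {w v : ℂ} (hw : 1 ≤ ‖w‖) (hv : ‖v‖ ≤ 1) :
    ‖1 - (starRingEnd ℂ) v * w‖ ≤ ‖w - v‖ := by
  have h1 : Complex.normSq (1 - (starRingEnd ℂ) v * w) ≤ Complex.normSq (w - v) := by
    have h2 := key_normSq w v
    have h3 : 1 ≤ Complex.normSq w := by
      rw [Complex.normSq_eq_norm_sq]; nlinarith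
    have h4 : Complex.normSq v ≤ 1 := by
      rw [Complex.normSq_eq_norm_sq]
      nlinarith [norm_nonneg v]
    nlinarith
  rw [Complex.norm_def, Complex.norm_def]
  exact Real.sqrt_le_sqrt h1

lemma abs_one_sub_conj_mul_lt {w v : ℂ} (hw : 1 < ‖w‖) (hv : ‖v‖ < 1) :
    ‖1 - (starRingEnd ℂ) v * w‖ < ‖w - v‖ := by
  have h1 : Complex.normSq (1 - (starRingEnd ℂ) v * w) < Complex.normSq (w - v) := by
    have h2 := key_normSq w v
    have h3 : 1 < Complex.normSq w := by
      rw [Complex.normSq_eq_norm_sq]; nlinarith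
    have h4 : Complex.normSq v < 1 := by
      rw [Complex.normSq_eq_norm_sq]
      nlinarith [norm_nonneg v]
    nlinarith
  rw [Complex.norm_def, Complex.norm_def]
  exact Real.sqrt_lt_sqrt (Complex.normSq_nonneg _) h1

lemma abs_sub_pos_of_lt {w v : ℂ} (hw : 1 < ‖w‖) (hv : ‖v‖ ≤ 1) :
    0 < ‖w - v‖ := by
  have h := norm_add_le (w - v) v
  simp only [sub_add_cancel] at h
  linarith

-- the key zero-freeness: |w∏(w-v_j)| > |q ∏(1 - conj v_j w)|
lemma outer_ne_zero (n : ℕ) (v : Fin n → ℂ) (hv : ∀ j, ‖v j‖ ≤ 1)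
    (q : ℂ) (hq : ‖q‖ ≤ 1) (w : ℂ) (hw : 1 < ‖w‖) :
    w * ∏ j, (w - v j) + q * ∏ j, (1 - (starRingEnd ℂ) (v j) * w) ≠ 0 := by
  intro h0
  have heq : w * ∏ j, (w - v j) = -(q * ∏ j, (1 - (starRingEnd ℂ) (v j) * w)) :=
    eq_neg_of_add_eq_zero_left h0
  have habs : ‖w‖ * ∏ j, ‖w - v j‖
      = ‖q‖ * ∏ j, ‖1 - (starRingEnd ℂ) (v j) * w‖ := by
    have := congrArg (‖·‖) heq
    rwa [norm_neg, norm_mul, norm_mul, norm_prod, norm_prod] at this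
  set A := ∏ j, ‖w - v j‖ with hA
  set B := ∏ j, ‖1 - (starRingEnd ℂ) (v j) * w‖ with hB
  have hApos : 0 < A := Finset.prod_pos fun j _ => abs_sub_pos_of_lt hw (hv j)
  have hBA : B ≤ A := Finset.prod_le_prod (fun j _ => norm_nonneg _)
    (fun j _ => abs_one_sub_conj_mul_le hw.le (hv j))
  have hBnn : 0 ≤ B := Finset.prod_nonneg fun j _ => norm_nonneg _
  nlinarith [norm_nonneg q]

-- Schur step: ∏(w - v_j) ≠ q ∏(1 - conj v_j w) given one strict |v j0| < 1
lemma schur_ne (n : ℕ) (v : Fin n → ℂ) (hv : ∀ j, ‖v j‖ ≤ 1)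
    (j0 : Fin n) (hj0 : ‖v j0‖ < 1)
    (q : ℂ) (hq : ‖q‖ ≤ 1) (w : ℂ) (hw : 1 < ‖w‖) :
    ∏ j, (w - v j) ≠ q * ∏ j, (1 - (starRingEnd ℂ) (v j) * w) := by
  intro heq
  have habs : ∏ j, ‖w - v j‖
      = ‖q‖ * ∏ j, ‖1 - (starRingEnd ℂ) (v j) * w‖ := by
    have := congrArg (‖·‖) heq
    rwa [norm_mul, norm_prod, norm_prod] at this
  set A := ∏ j, ‖w - v j‖ with hA
  set B := ∏ j, ‖1 - (starRingEnd ℂ) (v j) * w‖ with hB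
  have hBA : B < A := by
    have hBsplit : B = ‖1 - (starRingEnd ℂ) (v j0) * w‖
        * ∏ j ∈ Finset.univ.erase j0, ‖1 - (starRingEnd ℂ) (v j) * w‖ :=
      (Finset.mul_prod_erase _ _ (Finset.mem_univ j0)).symm
    have hAsplit : A = ‖w - v j0‖
        * ∏ j ∈ Finset.univ.erase j0, ‖w - v j‖ :=
      (Finset.mul_prod_erase _ _ (Finset.mem_univ j0)).symm
    have hle : (∏ j ∈ Finset.univ.erase j0, ‖1 - (starRingEnd ℂ) (v j) * w‖)
        ≤ ∏ j ∈ Finset.univ.erase j0, ‖w - v j‖ :=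
      Finset.prod_le_prod (fun j _ => norm_nonneg _)
        (fun j _ => abs_one_sub_conj_mul_le hw.le (hv j))
    have hpos : 0 < ∏ j ∈ Finset.univ.erase j0, ‖w - v j‖ :=
      Finset.prod_pos fun j _ => abs_sub_pos_of_lt hw (hv j)
    have hstrict := abs_one_sub_conj_mul_lt hw hj0
    rw [hBsplit, hAsplit]
    calc ‖1 - (starRingEnd ℂ) (v j0) * w‖
        * ∏ j ∈ Finset.univ.erase j0, ‖1 - (starRingEnd ℂ) (v j) * w‖
        ≤ ‖1 - (starRingEnd ℂ) (v j0) * w‖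
          * ∏ j ∈ Finset.univ.erase j0, ‖w - v j‖ := by
          exact mul_le_mul_of_nonneg_left hle (norm_nonneg _)
      _ < ‖w - v j0‖ * ∏ j ∈ Finset.univ.erase j0, ‖w - v j‖ :=
          mul_lt_mul_of_pos_right hstrict hpos
  have hBnn : 0 ≤ B := Finset.prod_nonneg fun j _ => norm_nonneg _
  nlinarith [norm_nonneg q]


-- Gauss-Lucas type: sum of products over erased sets nonzero outside disc
lemma deriv_sum_ne_zero (n : ℕ) (hn : 0 < n) (z : Fin n → ℂ)
    (hz : ∀ j, ‖z j‖ ≤ 1) (w : ℂ) (hw : 1 < ‖w‖) :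
    (∑ j, ∏ k ∈ Finset.univ.erase j, (w - z k)) ≠ 0 := by
  have hne : ∀ j, w - z j ≠ 0 := by
    intro j h
    have : w = z j := by linear_combination h
    rw [this] at hw; linarith [hz j]
  have hQ : ∀ j, ∏ k ∈ Finset.univ.erase j, (w - z k)
      = (∏ k, (w - z k)) * (w - z j)⁻¹ := by
    intro j
    rw [← Finset.prod_erase_mul _ _ (Finset.mem_univ j), mul_assoc,
      mul_inv_cancel₀ (hne j), mul_one]
  have hQne : (∏ k, (w - z k)) ≠ 0 := Finset.prod_ne_zero_iff.mpr fun j _ => hne j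
  rw [Finset.sum_congr rfl fun j _ => hQ j, ← Finset.mul_sum]
  refine mul_ne_zero hQne ?_
  -- S := ∑ (w - z j)⁻¹ ≠ 0
  set S := ∑ j, (w - z j)⁻¹ with hS
  intro hS0
  have hre : ((starRingEnd ℂ) w * (starRingEnd ℂ) S).re
      = ∑ j, ((starRingEnd ℂ) w * (w - z j) * ((Complex.normSq (w - z j))⁻¹ : ℝ)).re := by
    rw [hS, map_sum, Finset.mul_sum, Complex.re_sum]
    refine Finset.sum_congr rfl fun j _ => ?_
    have hconj : (starRingEnd ℂ) ((w - z j)⁻¹)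
        = (w - z j) * ((Complex.normSq (w - z j))⁻¹ : ℝ) := by
      rw [map_inv₀, Complex.inv_def, Complex.normSq_conj, Complex.conj_conj,
        Complex.ofReal_inv]
    rw [hconj, ← mul_assoc]
  have hpos : ∀ j, 0 < ((starRingEnd ℂ) w * (w - z j) * ((Complex.normSq (w - z j))⁻¹ : ℝ)).re := by
    intro j
    have h1 : ((starRingEnd ℂ) w * (w - z j) * ((Complex.normSq (w - z j))⁻¹ : ℝ)).re
        = ((starRingEnd ℂ) w * (w - z j)).re * (Complex.normSq (w - z j))⁻¹ := by
      simp [Complex.mul_re, Complex.ofReal_re, Complex.ofReal_im]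
    rw [h1]
    have h2 : 0 < (Complex.normSq (w - z j))⁻¹ :=
      inv_pos.mpr (Complex.normSq_pos.mpr (hne j))
    refine mul_pos ?_ h2
    have h3 : ((starRingEnd ℂ) w * (w - z j)).re
        = Complex.normSq w - ((starRingEnd ℂ) w * z j).re := by
      rw [mul_sub]
      simp [Complex.mul_conj', Complex.normSq_apply, Complex.mul_re, Complex.conj_re, Complex.conj_im]
      try ring
    rw [h3]
    have h4 : ((starRingEnd ℂ) w * z j).re ≤ ‖w‖ := by
      calc ((starRingEnd ℂ) w * z j).re ≤ ‖(starRingEnd ℂ) w * z j‖ :=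
            Complex.re_le_norm _
        _ = ‖w‖ * ‖z j‖ := by rw [norm_mul, Complex.norm_conj]
        _ ≤ ‖w‖ * 1 := by
            exact mul_le_mul_of_nonneg_left (hz j) (norm_nonneg _)
        _ = ‖w‖ := mul_one _
    have h5 : ‖w‖ < Complex.normSq w := by
      rw [Complex.normSq_eq_norm_sq]; nlinarith
    linarith
  have : 0 < ((starRingEnd ℂ) w * (starRingEnd ℂ) S).re := by
    rw [hre]
    exact Finset.sum_pos (fun j _ => hpos j) (Finset.univ_nonempty_iff.mpr (Fin.pos_iff_nonempty.mp hn))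
  rw [hS0] at this
  simp at this


-- self-inversive identity
lemma esymC_self_inversive (n k : ℕ) (hk : k ≤ n) (z : Fin n → ℂ)
    (hz : ∀ j, ‖z j‖ = 1) :
    (starRingEnd ℂ) (esymC n (n - k) z) * (∏ j, z j) = esymC n k z := by
  unfold esymC
  rw [map_sum, Finset.sum_mul]
  refine Finset.sum_nbij' (fun t => Finset.univ \ t) (fun u => Finset.univ \ u)
    ?_ ?_ ?_ ?_ ?_
  · intro t ht
    rw [Finset.mem_powersetCard_univ] at ht ⊢
    rw [Finset.card_sdiff_of_subset (Finset.subset_univ t), ht]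
    simp; omega
  · intro u hu
    rw [Finset.mem_powersetCard_univ] at hu ⊢
    rw [Finset.card_sdiff_of_subset (Finset.subset_univ u), hu]
    simp
  · intro t _
    exact Finset.sdiff_sdiff_eq_self (Finset.subset_univ t)
  · intro u _
    exact Finset.sdiff_sdiff_eq_self (Finset.subset_univ u)
  · intro t ht
    rw [Finset.mem_powersetCard_univ] at ht
    rw [map_prod]
    have hsplit : (∏ j, z j) = (∏ j ∈ Finset.univ \ t, z j) * ∏ j ∈ t, z j :=
      (Finset.prod_sdiff (Finset.subset_univ t)).symm
    rw [hsplit]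
    have hone : (∏ j ∈ t, (starRingEnd ℂ) (z j)) * ∏ j ∈ t, z j = 1 := by
      rw [← Finset.prod_mul_distrib]
      refine Finset.prod_eq_one fun j _ => ?_
      rw [Complex.conj_mul', hz j]
      norm_num
    calc (∏ j ∈ t, (starRingEnd ℂ) (z j)) * ((∏ j ∈ Finset.univ \ t, z j) * ∏ j ∈ t, z j)
        = ((∏ j ∈ t, (starRingEnd ℂ) (z j)) * ∏ j ∈ t, z j) * ∏ j ∈ Finset.univ \ t, z j := by
          ring
      _ = ∏ j ∈ Finset.univ \ t, z j := by rw [hone, one_mul]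

lemma abs_esymC_top_le (n : ℕ) (z : Fin n → ℂ) (hz : ∀ j, ‖z j‖ ≤ 1) :
    ‖∏ j, z j‖ ≤ 1 := by
  rw [norm_prod]
  exact Finset.prod_le_one (fun j _ => norm_nonneg _) (fun j _ => hz j)

lemma all_abs_eq_one (n : ℕ) (z : Fin n → ℂ) (hz : ∀ j, ‖z j‖ ≤ 1)
    (h : ‖∏ j, z j‖ = 1) : ∀ j, ‖z j‖ = 1 := by
  intro j
  by_contra hj
  have hjlt : ‖z j‖ < 1 := lt_of_le_of_ne (hz j) hj
  have : ‖∏ k, z k‖ < 1 := by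
    rw [norm_prod, ← Finset.mul_prod_erase _ _ (Finset.mem_univ j)]
    calc ‖z j‖ * ∏ k ∈ Finset.univ.erase j, ‖z k‖
        ≤ ‖z j‖ * 1 := by
          refine mul_le_mul_of_nonneg_left ?_ (norm_nonneg _)
          exact Finset.prod_le_one (fun k _ => norm_nonneg _) (fun k _ => hz k)
      _ < 1 := by rwa [mul_one]
  rw [h] at this
  exact lt_irrefl _ this


lemma coeff_prod_X_sub_C (n : ℕ) (z : Fin n → ℂ) (k : ℕ) (hk : k ≤ n) :
    (∏ j, (X - C (z j))).coeff (n - k) = (-1)^k * esymC n k z := by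
  have h : ∏ j : Fin n, (X - C (z j)) = ∏ j : Fin n, (X + C ((fun j => -z j) j)) := by
    refine Finset.prod_congr rfl fun j _ => by simp [sub_eq_add_neg]
  rw [h, coeff_prod_X_add_C n _ k hk, esymC_neg]

lemma monic_prod_X_sub_C (n : ℕ) (z : Fin n → ℂ) : (∏ j, (X - C (z j))).Monic :=
  monic_prod_of_monic _ _ (fun _ _ => monic_X_sub_C _)

lemma natDegree_prod_X_sub_C (n : ℕ) (z : Fin n → ℂ) :
    (∏ j, (X - C (z j))).natDegree = n := by
  rw [natDegree_prod_of_monic _ _ (fun _ _ => monic_X_sub_C _)]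
  simp

lemma eval_prod_X_sub_C (n : ℕ) (z : Fin n → ℂ) (w : ℂ) :
    (∏ j, (X - C (z j))).eval w = ∏ j, (w - z j) := by
  rw [eval_prod]; simp

lemma mem_of_poly (n : ℕ) (P : ℂ[X]) (hP : P.Monic) (hdeg : P.natDegree = n)
    (hroots : ∀ w ∈ P.roots, ‖w‖ ≤ 1) (x : Fin n → ℂ)
    (hcoeff : ∀ k : Fin n, P.coeff (n - (k.1+1)) = (-1)^(k.1+1) * x k) :
    x ∈ closedSymPolydisc n := by
  have hsplit : P.Splits := IsAlgClosed.splits P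
  have hcard : Multiset.card P.roots = n := by
    have := hsplit.natDegree_eq_card_roots
    rw [hdeg] at this
    omega
  set l := P.roots.toList with hl
  have hlen : l.length = n := by rw [hl, Multiset.length_toList, hcard]
  set z : Fin n → ℂ := fun j => l.get (Fin.cast hlen.symm j) with hz
  have hmem : ∀ j, z j ∈ P.roots := by
    intro j
    show l.get (Fin.cast hlen.symm j) ∈ P.roots
    have : l.get (Fin.cast hlen.symm j) ∈ l := l.get_mem _
    rwa [Multiset.mem_toList] at this
  have habs : ∀ j, ‖z j‖ ≤ 1 := fun j => hroots _ (hmem j)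
  have hfact : P = ∏ j, (X - C (z j)) := by
    have h1 : P = (P.roots.map (fun a => X - C a)).prod :=
      hsplit.eq_prod_roots_of_monic hP
    have h2 : P.roots = (l : Multiset ℂ) := by rw [hl, Multiset.coe_toList]
    rw [h1, h2]
    rw [show (Multiset.map (fun a => X - C a) (l : Multiset ℂ)) = ((l.map (fun a => X - C a) : List ℂ[X]) : Multiset ℂ[X]) from Multiset.map_coe _ _, Multiset.prod_coe]
    have h3 : l.map (fun a => X - C a) = List.ofFn (fun i : Fin l.length => X - C (l.get i)) := by
      conv_lhs => rw [← List.ofFn_get l, List.map_ofFn]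
      rfl
    rw [h3, List.prod_ofFn]
    exact Fintype.prod_equiv (finCongr hlen) _ _ (fun i => rfl)
  refine ⟨z, habs, funext fun k => ?_⟩
  have h4 : P.coeff (n - (k.1+1)) = (-1)^(k.1+1) * esymC n (k.1+1) z := by
    rw [hfact]; exact coeff_prod_X_sub_C n z (k.1+1) (by omega)
  have h5 := hcoeff k
  rw [h4] at h5
  have h6 : ((-1 : ℂ))^(k.1+1) ≠ 0 := pow_ne_zero _ (by norm_num)
  exact mul_left_cancel₀ h6 h5

lemma esymC_eq_zero_of_gt (n k : ℕ) (h : n < k) (z : Fin n → ℂ) : esymC n k z = 0 := by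
  unfold esymC
  rw [Finset.powersetCard_eq_empty.mpr (by simpa using h), Finset.sum_empty]

lemma neg_one_pow_mul_neg_one_pow (n i : ℕ) (h : i ≤ n) :
    ((-1 : ℂ))^n * (-1)^(n - i) = (-1)^i := by
  have hni : n + (n - i) = 2*(n - i) + i := by omega
  rw [← pow_add, hni, pow_add, pow_mul]
  norm_num

lemma derivative_finset_prod {ι : Type*} [DecidableEq ι] (s : Finset ι) (f : ι → ℂ[X]) :
    derivative (∏ i ∈ s, f i) = ∑ i ∈ s, (∏ j ∈ s.erase i, f j) * derivative (f i) := by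
  rw [Finset.prod_eq_multiset_prod, Polynomial.derivative_prod, Finset.sum_eq_multiset_sum]
  congr 1
-- Reverse direction: construction of the degree-(m+1) polynomial
lemma rev_mem (m : ℕ) (p : ℂ) (hp : ‖p‖ ≤ 1) (c : Fin m → ℂ) (wv : Fin m → ℂ)
    (hwv : ∀ j, ‖wv j‖ ≤ 1) (hcv : ∀ j : Fin m, c j = esymC m (j.1+1) wv)
    (x : Fin (m+1) → ℂ) (hlast : x (Fin.last m) = p)
    (hrel : ∀ k : Fin m, x k.castSucc = c k + (starRingEnd ℂ) (c k.rev) * p) :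
    x ∈ closedSymPolydisc (m+1) := by
  obtain ⟨q, hq⟩ : ∃ q : ℂ, q = (-1:ℂ)^(m+1) * p := ⟨_, rfl⟩
  have hqabs : ‖q‖ ≤ 1 := by
    rw [hq, norm_mul, norm_pow, norm_neg, norm_one, one_pow, one_mul]
    exact hp
  obtain ⟨R, hR⟩ : ∃ R : ℂ[X], R = ∏ j, (X - C (wv j)) := ⟨_, rfl⟩
  obtain ⟨Pstar, hPstar⟩ : ∃ Q : ℂ[X],
    Q = ∏ j : Fin m, (C (-((starRingEnd ℂ) (wv j))) * X + 1) := ⟨_, rfl⟩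
  obtain ⟨P, hP⟩ : ∃ P : ℂ[X], P = X * R + C q * Pstar := ⟨_, rfl⟩
  have hRdeg : R.natDegree = m := by rw [hR]; exact natDegree_prod_X_sub_C m wv
  have hRmonic : R.Monic := by rw [hR]; exact monic_prod_X_sub_C m wv
  have hPstarcoeff : ∀ k, Pstar.coeff k = (-1:ℂ)^k * (starRingEnd ℂ) (esymC m k wv) := by
    intro k
    rw [hPstar, coeff_prod_C_mul_X_add_one]
    rw [show (fun j : Fin m => -((starRingEnd ℂ) (wv j)))
      = (fun j => -((fun t => (starRingEnd ℂ) (wv t)) j)) from rfl, esymC_neg, esymC_conj]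
  have hPstardeg : Pstar.natDegree ≤ m := by
    rw [hPstar]
    refine le_trans (natDegree_prod_le _ _) ?_
    refine le_trans (Finset.sum_le_sum (fun j _ =>
      (le_trans (natDegree_add_le _ _) (max_le
        (le_trans (natDegree_C_mul_le _ _) (le_of_eq natDegree_X))
        (by rw [natDegree_one]; omega))))) ?_
    simp
  have hPcoeffn : P.coeff (m+1) = 1 := by
    rw [hP, coeff_add, coeff_C_mul,
      coeff_eq_zero_of_natDegree_lt (lt_of_le_of_lt hPstardeg (by omega)), mul_zero, add_zero,
      coeff_X_mul, ← hRdeg]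
    exact hRmonic.coeff_natDegree
  have hPdegle : P.natDegree ≤ m+1 := by
    rw [hP]
    refine le_trans (natDegree_add_le _ _) (max_le ?_ ?_)
    · exact le_trans natDegree_mul_le (by rw [natDegree_X, hRdeg]; omega)
    · exact le_trans (natDegree_C_mul_le _ _) (by omega)
  have hPmonic : P.Monic := monic_of_natDegree_le_of_coeff_eq_one (m+1) hPdegle hPcoeffn
  have hPdeg : P.natDegree = m+1 :=
    le_antisymm hPdegle (le_natDegree_of_ne_zero (by rw [hPcoeffn]; norm_num))
  have hroots : ∀ w ∈ P.roots, ‖w‖ ≤ 1 := by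
    intro w hw
    by_contra habs
    push_neg at habs
    have hwroot : P.eval w = 0 := Polynomial.isRoot_of_mem_roots hw
    rw [hP, eval_add, eval_mul, eval_X, eval_mul, eval_C, hR, eval_prod_X_sub_C, hPstar,
      eval_prod] at hwroot
    have hfix : ∀ j : Fin m, ((C (-((starRingEnd ℂ) (wv j))) * X + 1).eval w)
        = 1 - (starRingEnd ℂ) (wv j) * w := by
      intro j
      simp only [eval_add, eval_mul, eval_C, eval_X, eval_one]
      ring
    rw [Finset.prod_congr rfl fun j _ => hfix j] at hwroot
    exact outer_ne_zero m wv hwv q hqabs w habs hwroot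
  refine mem_of_poly (m+1) P hPmonic hPdeg hroots x ?_
  intro k
  by_cases hkm : k.1 < m
  · have hxk : x k = x (⟨k.1, hkm⟩ : Fin m).castSucc := by
      congr 1
    have hi : k.1 + 1 ≤ m := hkm
    have hXR : (X * R).coeff (m+1 - (k.1+1)) = (-1:ℂ)^(k.1+1) * c ⟨k.1, hkm⟩ := by
      rw [show m+1 - (k.1+1) = (m - (k.1+1)) + 1 from by omega, coeff_X_mul, hR,
        coeff_prod_X_sub_C m wv (k.1+1) hi, hcv ⟨k.1, hkm⟩]
    have hrevval : ((⟨k.1, hkm⟩ : Fin m).rev.1 + 1) = m - k.1 := by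
      have hv : ((⟨k.1, hkm⟩ : Fin m)).1 = k.1 := rfl
      rw [Fin.val_rev, hv]
      omega
    have hps : Pstar.coeff (m+1 - (k.1+1))
        = (-1:ℂ)^(m - k.1) * (starRingEnd ℂ) (c (⟨k.1, hkm⟩ : Fin m).rev) := by
      rw [show m+1 - (k.1+1) = m - k.1 from by omega, hPstarcoeff, hcv, hrevval]
    rw [hP, coeff_add, coeff_C_mul, hXR, hps]
    have hq2 : q * (-1:ℂ)^(m - k.1) = (-1:ℂ)^(k.1+1) * p := by
      rw [hq]
      rw [show (m - k.1) = m+1 - (k.1 + 1) from by omega]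
      calc (-1:ℂ)^(m+1) * p * (-1:ℂ)^(m+1 - (k.1+1))
          = ((-1:ℂ)^(m+1) * (-1:ℂ)^(m+1-(k.1+1))) * p := by ring
        _ = (-1:ℂ)^(k.1+1) * p := by
            rw [neg_one_pow_mul_neg_one_pow (m+1) (k.1+1) (by omega)]
    rw [hxk, hrel ⟨k.1, hkm⟩]
    linear_combination (starRingEnd ℂ) (c (⟨k.1, hkm⟩ : Fin m).rev) * hq2
  · have hk1 : k.1 = m := by
      have := k.2
      omega
    have hxk : x k = p := by
      rw [← hlast]
      congr 1
      exact Fin.ext hk1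
    rw [show m+1 - (k.1+1) = 0 from by omega]
    rw [hP, coeff_add, mul_coeff_zero, coeff_X_zero, zero_mul, zero_add, coeff_C_mul,
      hPstarcoeff 0, esymC_zero, map_one, pow_zero, one_mul, mul_one]
    rw [hxk, hq, hk1]
-- |p| = 1 case membership: derivative / Gauss--Lucas construction
lemma gauss_mem (m : ℕ) (z : Fin (m+1) → ℂ) (hz : ∀ j, ‖z j‖ ≤ 1)
    (c : Fin m → ℂ)
    (hcv : ∀ k : Fin m, c k
      = ((((m:ℂ)+1) - ((k.1:ℂ)+1)) / ((m:ℂ)+1)) * esymC (m+1) (k.1+1) z) :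
    c ∈ closedSymPolydisc m := by
  have hnne : ((m:ℂ)+1) ≠ 0 := by
    intro h
    have := congrArg Complex.re h
    push_cast at this
    norm_num at this
    nlinarith [Nat.cast_nonneg (α := ℝ) m, this]
  obtain ⟨P, hPd⟩ : ∃ P : ℂ[X], P = ∏ j, (X - C (z j)) := ⟨_, rfl⟩
  obtain ⟨R, hRd⟩ : ∃ R : ℂ[X], R = C (((m:ℂ)+1))⁻¹ * derivative P := ⟨_, rfl⟩
  have hPdeg : P.natDegree = m+1 := by rw [hPd]; exact natDegree_prod_X_sub_C (m+1) z
  have hPmonic : P.Monic := by rw [hPd]; exact monic_prod_X_sub_C (m+1) z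
  have hRdeg : R.natDegree ≤ m := by
    rw [hRd]
    refine le_trans (natDegree_C_mul_le _ _) (le_trans (natDegree_derivative_le P) ?_)
    rw [hPdeg]
    omega
  have hPcoeffs : ∀ i, i ≤ m+1 → P.coeff (m+1 - i) = (-1:ℂ)^i * esymC (m+1) i z := by
    intro i hi
    rw [hPd]; exact coeff_prod_X_sub_C (m+1) z i hi
  have hPtop : P.coeff (m+1) = 1 := by
    have h := hPcoeffs 0 (by omega)
    rw [Nat.sub_zero] at h
    rw [h, esymC_zero, pow_zero, one_mul]
  have hRcoeffm : R.coeff m = 1 := by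
    rw [hRd, coeff_C_mul, coeff_derivative, hPtop, one_mul]
    exact inv_mul_cancel₀ hnne
  have hRmonic : R.Monic := monic_of_natDegree_le_of_coeff_eq_one m hRdeg hRcoeffm
  have hRdeg' : R.natDegree = m :=
    le_antisymm hRdeg (le_natDegree_of_ne_zero (by rw [hRcoeffm]; norm_num))
  have hroots : ∀ w ∈ R.roots, ‖w‖ ≤ 1 := by
    intro w hw
    by_contra habs
    push_neg at habs
    have hevR : R.eval w = 0 := Polynomial.isRoot_of_mem_roots hw
    have hevD : (derivative P).eval w = 0 := by
      rw [hRd, eval_mul, eval_C] at hevR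
      rcases mul_eq_zero.mp hevR with h | h
      · exact absurd h (inv_ne_zero hnne)
      · exact h
    have hder : derivative P = ∑ j, (∏ k ∈ Finset.univ.erase j, (X - C (z k))) := by
      rw [hPd, derivative_finset_prod]
      refine Finset.sum_congr rfl fun j _ => ?_
      rw [derivative_sub, derivative_X, derivative_C, sub_zero, mul_one]
    rw [hder] at hevD
    have hevD2 : (∑ j, ∏ k ∈ Finset.univ.erase j, (w - z k)) = 0 := by
      rw [← hevD, eval_finset_sum]
      refine Finset.sum_congr rfl fun j _ => ?_
      rw [eval_prod]
      refine Finset.prod_congr rfl fun k _ => ?_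
      simp
    exact deriv_sum_ne_zero (m+1) (by omega) z hz w habs hevD2
  refine mem_of_poly m R hRmonic hRdeg' hroots c ?_
  intro k
  have hkm : k.1 < m := k.2
  rw [hRd, coeff_C_mul, coeff_derivative,
    show m - (k.1+1) + 1 = m+1 - (k.1+1) from by omega,
    hPcoeffs (k.1+1) (by omega), hcv k]
  have hcast : ((m - (k.1+1) : ℕ) : ℂ) + 1 = ((m:ℂ)+1) - ((k.1:ℂ)+1) := by
    rw [Nat.cast_sub (by omega : k.1 + 1 ≤ m)]
    push_cast
    ring
  rw [hcast]
  field_simp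
-- |p| < 1 case membership: Schur reduction
lemma schur_mem (m : ℕ) (z : Fin (m+1) → ℂ) (hz : ∀ j, ‖z j‖ ≤ 1)
    (hplt : ‖esymC (m+1) (m+1) z‖ < 1)
    (c : Fin m → ℂ)
    (hcv : ∀ k : Fin m, c k
      = ((1:ℂ) - esymC (m+1) (m+1) z * (starRingEnd ℂ) (esymC (m+1) (m+1) z))⁻¹
        * (esymC (m+1) (k.1+1) z
          - esymC (m+1) (m+1) z * (starRingEnd ℂ) (esymC (m+1) (m - k.1) z))) :
    c ∈ closedSymPolydisc m := by
  obtain ⟨p, hpd⟩ : ∃ p : ℂ, p = esymC (m+1) (m+1) z := ⟨_, rfl⟩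
  rw [← hpd] at hplt
  have hpnormSq : (1 : ℂ) - p * (starRingEnd ℂ) p ≠ 0 := by
    rw [Complex.mul_conj]
    rw [show (1 : ℂ) - (Complex.normSq p : ℂ) = ((1 - Complex.normSq p : ℝ) : ℂ) by
      push_cast; ring]
    rw [Complex.ofReal_ne_zero]
    have h1 : Complex.normSq p < 1 := by
      rw [Complex.normSq_eq_norm_sq]; nlinarith [norm_nonneg p]
    exact ne_of_gt (by linarith)
  obtain ⟨u, hu⟩ : ∃ u : ℂ, u = ((1 : ℂ) - p * (starRingEnd ℂ) p)⁻¹ := ⟨_, rfl⟩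
  have hune : u ≠ 0 := by rw [hu]; exact inv_ne_zero hpnormSq
  obtain ⟨P, hPd⟩ : ∃ P : ℂ[X], P = ∏ j, (X - C (z j)) := ⟨_, rfl⟩
  obtain ⟨Pstar, hPsd⟩ : ∃ Q : ℂ[X],
    Q = ∏ j : Fin (m+1), (C (-((starRingEnd ℂ) (z j))) * X + 1) := ⟨_, rfl⟩
  obtain ⟨N, hNd⟩ : ∃ N : ℂ[X], N = P - C ((-1:ℂ)^(m+1) * p) * Pstar := ⟨_, rfl⟩
  obtain ⟨R, hRd⟩ : ∃ R : ℂ[X], R = C u * N.divX := ⟨_, rfl⟩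
  have hNcoeff : ∀ i, i ≤ m+1 → N.coeff (m+1 - i)
      = (-1:ℂ)^i * (esymC (m+1) i z - p * (starRingEnd ℂ) (esymC (m+1) (m+1 - i) z)) := by
    intro i hi
    rw [hNd, coeff_sub, coeff_C_mul, hPd, coeff_prod_X_sub_C (m+1) z i hi, hPsd,
      coeff_prod_C_mul_X_add_one]
    have hconjstep : esymC (m+1) (m+1-i) (fun j => -((starRingEnd ℂ) (z j)))
        = (-1:ℂ)^(m+1-i) * (starRingEnd ℂ) (esymC (m+1) (m+1-i) z) := by
      rw [show (fun j : Fin (m+1) => -((starRingEnd ℂ) (z j)))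
        = (fun j => -((fun t => (starRingEnd ℂ) (z t)) j)) from rfl, esymC_neg, esymC_conj]
    rw [hconjstep]
    have hsg := neg_one_pow_mul_neg_one_pow (m+1) i hi
    linear_combination (-(p * (starRingEnd ℂ) (esymC (m+1) (m+1 - i) z))) * hsg
  have hNn : N.coeff (m+1) = (1:ℂ) - p * (starRingEnd ℂ) p := by
    have h := hNcoeff 0 (by omega)
    rw [Nat.sub_zero] at h
    rw [h, esymC_zero, ← hpd, pow_zero, one_mul]
  have hN0 : N.coeff 0 = 0 := by
    have h := hNcoeff (m+1) (le_refl (m+1))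
    rw [Nat.sub_self] at h
    rw [h, esymC_zero, ← hpd, map_one, mul_one, sub_self, mul_zero]
  have hNdeg : N.natDegree ≤ m+1 := by
    rw [hNd]
    refine le_trans (natDegree_sub_le _ _) (max_le ?_ ?_)
    · rw [hPd, natDegree_prod_X_sub_C (m+1) z]
    · refine le_trans (natDegree_C_mul_le _ _) ?_
      rw [hPsd]
      refine le_trans (natDegree_prod_le _ _) ?_
      refine le_trans (Finset.sum_le_sum (fun j _ =>
        (le_trans (natDegree_add_le _ _) (max_le
          (le_trans (natDegree_C_mul_le _ _) (le_of_eq natDegree_X))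
          (by rw [natDegree_one]; omega))))) ?_
      simp
  have hRdeg : R.natDegree ≤ m := by
    rw [Polynomial.natDegree_le_iff_coeff_eq_zero]
    intro j hj
    rw [hRd, coeff_C_mul, coeff_divX,
      coeff_eq_zero_of_natDegree_lt (lt_of_le_of_lt hNdeg (by omega)), mul_zero]
  have hRcoeffm : R.coeff m = 1 := by
    rw [hRd, coeff_C_mul, coeff_divX, hNn, hu]
    exact inv_mul_cancel₀ hpnormSq
  have hRmonic : R.Monic := monic_of_natDegree_le_of_coeff_eq_one m hRdeg hRcoeffm
  have hRdeg' : R.natDegree = m :=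
    le_antisymm hRdeg (le_natDegree_of_ne_zero (by rw [hRcoeffm]; norm_num))
  have hj0 : ∃ j0, ‖z j0‖ < 1 := by
    by_contra hall
    push_neg at hall
    have hall1 : ∀ j, ‖z j‖ = 1 := fun j => le_antisymm (hz j) (hall j)
    have habs1 : ‖p‖ = 1 := by
      rw [hpd, esymC_top, norm_prod]
      exact Finset.prod_eq_one fun j _ => hall1 j
    rw [habs1] at hplt
    exact lt_irrefl _ hplt
  obtain ⟨j0, hj0⟩ := hj0
  have hqabs : ‖(-1:ℂ)^(m+1) * p‖ ≤ 1 := by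
    rw [norm_mul, norm_pow, norm_neg, norm_one, one_pow, one_mul]
    exact le_of_lt hplt
  have hroots : ∀ w ∈ R.roots, ‖w‖ ≤ 1 := by
    intro w hw
    by_contra habs
    push_neg at habs
    have hevR : R.eval w = 0 := Polynomial.isRoot_of_mem_roots hw
    have hevdivX : N.divX.eval w = 0 := by
      rw [hRd, eval_mul, eval_C] at hevR
      rcases mul_eq_zero.mp hevR with h | h
      · exact absurd h hune
      · exact h
    have hevN : N.eval w = 0 := by
      conv_lhs => rw [← X_mul_divX_add N]
      rw [eval_add, eval_mul, eval_X, hevdivX, mul_zero, hN0, map_zero, zero_add, eval_zero]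
    have heq : ∏ j, (w - z j)
        = ((-1:ℂ)^(m+1) * p) * ∏ j, ((1:ℂ) - (starRingEnd ℂ) (z j) * w) := by
      rw [hNd, eval_sub, eval_mul, eval_C, hPd, eval_prod_X_sub_C, hPsd, eval_prod] at hevN
      have hfix : ∀ j : Fin (m+1), ((C (-((starRingEnd ℂ) (z j))) * X + 1).eval w)
          = 1 - (starRingEnd ℂ) (z j) * w := by
        intro j
        simp only [eval_add, eval_mul, eval_C, eval_X, eval_one]
        ring
      rw [Finset.prod_congr rfl fun j _ => hfix j] at hevN
      linear_combination hevN
    exact schur_ne (m+1) z hz j0 hj0 ((-1:ℂ)^(m+1) * p) hqabs w habs heq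
  refine mem_of_poly m R hRmonic hRdeg' hroots c ?_
  intro k
  have hkm : k.1 < m := k.2
  rw [hRd, coeff_C_mul, coeff_divX,
    show m - (k.1+1) + 1 = m+1 - (k.1+1) from by omega,
    hNcoeff (k.1+1) (by omega), hcv k,
    show m+1 - (k.1+1) = m - k.1 from by omega, ← hpd, ← hu]
  ring

/-- Costara's characterization: for `n = m + 1 ≥ 2`, a point
`(s₁, …, s_{n-1}, p)` (here `x i.castSucc = s_{i+1}` for `i : Fin m` and
`x (Fin.last m) = p`) lies in `Γₙ` iff `|p| ≤ 1` and there is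
`(c₁, …, c_{n-1}) ∈ Γ_{n-1}` with `sᵢ = cᵢ + conj(c_{n-i}) p` for all
`i = 1, …, n-1` (note `c i.rev = c_{n-i}` when `c i = c_{i+1}`). -/
theorem mem_closedSymPolydisc_iff_exists_rep (m : ℕ) (hm : 1 ≤ m)
    (x : Fin (m + 1) → ℂ) :
    x ∈ closedSymPolydisc (m + 1) ↔
      ‖x (Fin.last m)‖ ≤ 1 ∧
        ∃ c : Fin m → ℂ, c ∈ closedSymPolydisc m ∧
          ∀ i : Fin m,
            x i.castSucc = c i + (starRingEnd ℂ) (c i.rev) * x (Fin.last m) := by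
  constructor
  · rintro ⟨z, hz, hxz⟩
    have hx : ∀ j : Fin (m+1), x j = esymC (m+1) (j.1 + 1) z :=
      fun j => (congrFun hxz j).symm
    have hxlast : x (Fin.last m) = esymC (m+1) (m+1) z := hx (Fin.last m)
    have hxprod : x (Fin.last m) = ∏ j, z j := by rw [hxlast, esymC_top]
    have hp : ‖x (Fin.last m)‖ ≤ 1 := by
      rw [hxprod]; exact abs_esymC_top_le (m+1) z hz
    refine ⟨hp, ?_⟩
    have hs1 : ∀ k : Fin m, esymC (m+1) (k.1+1) z = x k.castSucc :=
      fun k => (hx k.castSucc).symm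
    have hs2 : ∀ k : Fin m, esymC (m+1) (m - k.1) z = x k.rev.castSucc := by
      intro k
      have hval : (k.rev.castSucc.1) + 1 = m - k.1 := by
        have h1 : (k.rev.castSucc.1) = k.rev.1 := rfl
        have h2 : k.rev.1 = m - (k.1 + 1) := Fin.val_rev k
        have h3 : k.1 < m := k.2
        omega
      rw [← hval]
      exact (hx k.rev.castSucc).symm
    by_cases hp1 : ‖x (Fin.last m)‖ = 1
    · -- |p| = 1 : Gauss--Lucas / derivative construction
      have hz1 : ∀ j, ‖z j‖ = 1 :=
        all_abs_eq_one (m+1) z hz (by rw [← hxprod]; exact hp1)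
      have hself : ∀ i : ℕ, i ≤ m+1 →
          (starRingEnd ℂ) (esymC (m+1) (m+1 - i) z) * x (Fin.last m)
            = esymC (m+1) i z := by
        intro i hi
        rw [hxprod]
        exact esymC_self_inversive (m+1) i hi z hz1
      have hnne : ((m:ℂ)+1) ≠ 0 := by
        intro h
        have h2 := congrArg Complex.re h
        push_cast at h2
        have : (0:ℝ) ≤ (m:ℝ) := Nat.cast_nonneg m
        simp at h2
        linarith
      refine ⟨fun k => ((((m:ℂ)+1) - ((k.1:ℂ)+1)) / ((m:ℂ)+1)) * x k.castSucc, ?_, ?_⟩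
      · refine gauss_mem m z hz _ fun k => ?_
        rw [hs1 k]
      · intro k
        simp only []
        have hconj : (starRingEnd ℂ)
            (((((m:ℂ)+1) - ((k.rev.1:ℂ)+1)) / ((m:ℂ)+1)) * x k.rev.castSucc)
            = ((((m:ℂ)+1) - ((k.rev.1:ℂ)+1)) / ((m:ℂ)+1))
              * (starRingEnd ℂ) (x k.rev.castSucc) := by
          rw [map_mul, map_div₀, map_sub, map_add, map_natCast, map_one, map_add,
            map_natCast, map_one]
        rw [hconj, mul_assoc]
        have hx2 : (starRingEnd ℂ) (x k.rev.castSucc) * x (Fin.last m) = x k.castSucc := by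
          rw [← hs2 k, ← hs1 k, show m - k.1 = m+1 - (k.1+1) from by omega]
          exact hself (k.1+1) (by omega)
        rw [hx2]
        have hrevc : ((k.rev.1:ℂ)+1) = ((m:ℂ)+1) - ((k.1:ℂ)+1) := by
          have h2 : k.rev.1 = m - (k.1+1) := Fin.val_rev k
          have h3 : k.1 < m := k.2
          rw [h2, Nat.cast_sub (by omega : k.1+1 ≤ m)]
          push_cast
          ring
        rw [hrevc]
        field_simp
        ring
    · -- |p| < 1 : Schur reduction
      have hplt : ‖x (Fin.last m)‖ < 1 := lt_of_le_of_ne hp hp1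
      have hplt' : ‖esymC (m+1) (m+1) z‖ < 1 := by
        rw [← hxlast]; exact hplt
      refine ⟨fun k => ((1:ℂ) - x (Fin.last m) * (starRingEnd ℂ) (x (Fin.last m)))⁻¹
        * (x k.castSucc - x (Fin.last m) * (starRingEnd ℂ) (x k.rev.castSucc)), ?_, ?_⟩
      · refine schur_mem m z hz hplt' _ fun k => ?_
        rw [hs1 k, hs2 k, hxlast]
      · intro k
        have hpnormSq : (1 : ℂ) - x (Fin.last m) * (starRingEnd ℂ) (x (Fin.last m)) ≠ 0 := by
          rw [Complex.mul_conj]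
          rw [show (1 : ℂ) - (Complex.normSq (x (Fin.last m)) : ℂ)
            = ((1 - Complex.normSq (x (Fin.last m)) : ℝ) : ℂ) by push_cast; ring]
          rw [Complex.ofReal_ne_zero]
          have h1 : Complex.normSq (x (Fin.last m)) < 1 := by
            rw [Complex.normSq_eq_norm_sq]
            nlinarith [norm_nonneg (x (Fin.last m))]
          exact ne_of_gt (by linarith)
        have humul : ((1:ℂ) - x (Fin.last m) * (starRingEnd ℂ) (x (Fin.last m)))⁻¹
            * ((1:ℂ) - x (Fin.last m) * (starRingEnd ℂ) (x (Fin.last m))) = 1 :=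
          inv_mul_cancel₀ hpnormSq
        have huc : (starRingEnd ℂ)
            (((1:ℂ) - x (Fin.last m) * (starRingEnd ℂ) (x (Fin.last m)))⁻¹)
            = ((1:ℂ) - x (Fin.last m) * (starRingEnd ℂ) (x (Fin.last m)))⁻¹ := by
          rw [map_inv₀, map_sub, map_one, map_mul, Complex.conj_conj, mul_comm]
        simp only [Fin.rev_rev]
        rw [map_mul, huc, map_sub, map_mul, Complex.conj_conj]
        linear_combination (-(x k.castSucc)) * humul
  · rintro ⟨hp, c, ⟨wv, hwv, hc⟩, hrel⟩
    exact rev_mem m (x (Fin.last m)) hp c wv hwv (fun j => (congrFun hc j).symm) x rfl hrel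
end

section
/- For n ≥ 2, if (s₁,…,s_{n-1},p) ∈ 𝔾ₙ then |p| < 1 and the tuple Q = ((s₁ − conj(s_{n-1})p)/(1−|p|²), (s₂ − conj(s_{n-2})p)/(1−|p|²), …, (s_{n-1} − conj(s₁)p)/(1−|p|²)) belongs to 𝔾_{n-1}. -/
open Finset

/-- The open symmetrized polydisc `𝔾ₙ`. -/
noncomputable def openSymPolydisc (n : ℕ) : Set (Fin n → ℂ) :=
  {x | ∃ z : Fin n → ℂ, (∀ j, ‖z j‖ < 1) ∧ symMap n z = x}

open Polynomial in
private lemma reflect_linear_aux (a : ℂ) :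
    Polynomial.reflect 1 (X - C a) = 1 - C a * X := by
  have h : (X - C a : ℂ[X]) = X ^ 1 + C (-a) * X ^ 0 := by
    simp [sub_eq_add_neg]
  rw [h, Polynomial.reflect_add, Polynomial.reflect_C_mul_X_pow,
    Polynomial.reflect_monomial, Polynomial.revAt_le (by norm_num : (1:ℕ) ≤ 1),
    Polynomial.revAt_le (by norm_num : (0:ℕ) ≤ 1)]
  simp [sub_eq_add_neg]

open Polynomial in
private lemma reflect_prod_lin {ι : Type*} (s : Finset ι) (a : ι → ℂ) :
    Polynomial.reflect s.card (∏ j ∈ s, (X - C (a j))) =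
      ∏ j ∈ s, (1 - C (a j) * X) := by
  induction s using Finset.cons_induction with
  | empty => simp
  | cons i s hi ih =>
    have hdeg : (∏ j ∈ s, (X - C (a j))).natDegree ≤ s.card := by
      refine le_trans (Polynomial.natDegree_prod_le _ _) ?_
      simp [Polynomial.natDegree_X_sub_C]
    rw [Finset.prod_cons, Finset.prod_cons, Finset.card_cons, add_comm s.card 1,
      Polynomial.reflect_mul _ _ (by simp [Polynomial.natDegree_X_sub_C]) hdeg,
      reflect_linear_aux, ih]

private lemma abs_one_sub_conj_mul_le_s5 {z t : ℂ} (hz : ‖z‖ < 1)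
    (ht : 1 ≤ ‖t‖) :
    ‖1 - (starRingEnd ℂ) z * t‖ ≤ ‖t - z‖ := by
  have hz0 : 0 ≤ ‖z‖ := norm_nonneg z
  have h1 : Complex.normSq z ≤ 1 := by
    rw [Complex.normSq_eq_norm_sq]; nlinarith
  have h2 : 1 ≤ Complex.normSq t := by
    rw [Complex.normSq_eq_norm_sq]; nlinarith [norm_nonneg t]
  have e : Complex.normSq (t - z) - Complex.normSq (1 - (starRingEnd ℂ) z * t)
      = (Complex.normSq t - 1) * (1 - Complex.normSq z) := by
    simp only [Complex.normSq_apply, Complex.sub_re, Complex.sub_im, Complex.mul_re,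
      Complex.mul_im, Complex.conj_re, Complex.conj_im, Complex.one_re, Complex.one_im]
    ring
  have key : Complex.normSq (1 - (starRingEnd ℂ) z * t) ≤ Complex.normSq (t - z) := by
    nlinarith
  rw [Complex.norm_def, Complex.norm_def]
  exact Real.sqrt_le_sqrt key

/-- For `n = m + 1 ≥ 2`, if `(s₁, …, s_{n-1}, p) ∈ 𝔾ₙ` (here
`x i.castSucc = s_{i+1}` for `i : Fin m` and `x (Fin.last m) = p`), then
`|p| < 1` and the tuple `Q` with `Qᵢ = (sᵢ - conj(s_{n-i}) p) / (1 - |p|²)`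
lies in `𝔾_{n-1}` (note `x i.rev.castSucc = s_{n-i}` when
`x i.castSucc = s_{i+1}`). -/
theorem Q_mem_openSymPolydisc (m : ℕ) (hm : 1 ≤ m)
    (x : Fin (m + 1) → ℂ) (hx : x ∈ openSymPolydisc (m + 1)) :
    ‖x (Fin.last m)‖ < 1 ∧
      (fun i : Fin m =>
          (x i.castSucc - (starRingEnd ℂ) (x i.rev.castSucc) * x (Fin.last m)) /
            (1 - (‖x (Fin.last m)‖ : ℂ) ^ 2)) ∈ openSymPolydisc m := by
  classical
  obtain ⟨z, hz, hsym⟩ := hx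
  subst hsym
  set E : ℕ → ℂ := fun k => esymC (m + 1) k z with hEdef
  -- basic facts about E
  have hEesymm : ∀ k, E k = (Multiset.map z (univ : Finset (Fin (m + 1))).val).esymm k := by
    intro k
    rw [Finset.esymm_map_val]
    rfl
  have hcardz : Multiset.card (Multiset.map z (univ : Finset (Fin (m + 1))).val) = m + 1 := by
    simp
  have hE0 : E 0 = 1 := by
    simp [hEdef, esymC]
  have hEtop : E (m + 1) = ∏ j, z j := by
    have h1 : (univ : Finset (Fin (m + 1))).card = m + 1 := by simp
    have : Finset.powersetCard (m + 1) (univ : Finset (Fin (m + 1))) = {univ} := by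
      have h2 := Finset.powersetCard_self (univ : Finset (Fin (m + 1)))
      rwa [h1] at h2
    simp [hEdef, esymC, this]
  set p : ℂ := E (m + 1) with hpdef
  set u : ℂ := 1 - p * (starRingEnd ℂ) p with hudef
  have hp : ‖p‖ < 1 := by
    rw [hEtop, norm_prod]
    by_cases hzero : ∃ j, ‖z j‖ = 0
    · obtain ⟨j, hj⟩ := hzero
      rw [Finset.prod_eq_zero (Finset.mem_univ j) hj]
      norm_num
    · push_neg at hzero
      calc ∏ j, ‖z j‖ < ∏ _j : Fin (m + 1), 1 := by
            refine Finset.prod_lt_prod_of_nonempty ?_ ?_ univ_nonempty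
            · intro i _
              exact lt_of_le_of_ne (norm_nonneg _) (Ne.symm (hzero i))
            · intro i _
              exact hz i
        _ = 1 := by simp
  have hu : u ≠ 0 := by
    rw [hudef, Complex.mul_conj, sub_ne_zero]
    intro hcontra
    have : Complex.normSq p = 1 := by
      have := congrArg Complex.re hcontra
      simpa using this.symm
    rw [Complex.normSq_eq_norm_sq] at this
    nlinarith [norm_nonneg p]
  -- the polynomials
  set g : Polynomial ℂ := ∏ j : Fin (m + 1), (Polynomial.X - Polynomial.C (z j)) with hgdef
  set gd : Polynomial ℂ :=
    ∏ j : Fin (m + 1), (Polynomial.X - Polynomial.C ((starRingEnd ℂ) (z j))) with hgddef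
  set G : Polynomial ℂ := Polynomial.reflect (m + 1) gd with hGdef
  set c : ℂ := (-1) ^ (m + 1) * p with hcdef
  set h : Polynomial ℂ := g - Polynomial.C c * G with hhdef
  -- coefficients of g
  have hgmul : g = (Multiset.map (fun t => Polynomial.X - Polynomial.C t)
      (Multiset.map z (univ : Finset (Fin (m + 1))).val)).prod := by
    rw [Multiset.map_map]
    rfl
  have hgcoeff : ∀ k, k ≤ m + 1 → g.coeff (m + 1 - k) = (-1) ^ k * E k := by
    intro k hk
    have hle : m + 1 - k ≤ Multiset.card (Multiset.map z (univ : Finset (Fin (m + 1))).val) := by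
      rw [hcardz]; omega
    rw [hgmul, Multiset.prod_X_sub_C_coeff _ hle, hcardz]
    have h1 : m + 1 - (m + 1 - k) = k := by omega
    rw [h1, ← hEesymm]
  -- coefficients of gd
  have hgdmul : gd = (Multiset.map (fun t => Polynomial.X - Polynomial.C t)
      (Multiset.map (fun j => (starRingEnd ℂ) (z j)) (univ : Finset (Fin (m + 1))).val)).prod := by
    rw [Multiset.map_map]
    rfl
  have hgdcoeff : ∀ k, k ≤ m + 1 → gd.coeff k = (-1) ^ (m + 1 - k) * (starRingEnd ℂ) (E (m + 1 - k)) := by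
    intro k hk
    have hle : k ≤ Multiset.card (Multiset.map (fun j => (starRingEnd ℂ) (z j))
        (univ : Finset (Fin (m + 1))).val) := by
      simp; omega
    rw [hgdmul, Multiset.prod_X_sub_C_coeff _ hle]
    have hcard' : Multiset.card (Multiset.map (fun j => (starRingEnd ℂ) (z j))
        (univ : Finset (Fin (m + 1))).val) = m + 1 := by simp
    rw [hcard']
    congr 1
    rw [Finset.esymm_map_val]
    rw [hEdef]
    simp only [esymC]
    rw [map_sum]
    refine Finset.sum_congr rfl fun t _ => ?_
    rw [map_prod]
  -- degrees
  have hgddeg : gd.natDegree = m + 1 := by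
    rw [hgddef, Polynomial.natDegree_prod_of_monic]
    · simp [Polynomial.natDegree_X_sub_C]
    · intro i _
      exact Polynomial.monic_X_sub_C _
  have hgdeg : g.natDegree = m + 1 := by
    rw [hgdef, Polynomial.natDegree_prod_of_monic]
    · simp [Polynomial.natDegree_X_sub_C]
    · intro i _
      exact Polynomial.monic_X_sub_C _
  have hGcoeff : ∀ k, k ≤ m + 1 → G.coeff (m + 1 - k) = gd.coeff k := by
    intro k hk
    rw [hGdef, Polynomial.coeff_reflect, Polynomial.revAt_le (by omega : m + 1 - k ≤ m + 1)]
    congr 1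
    omega
  have hGdeg : G.natDegree ≤ m + 1 := by
    rw [Polynomial.natDegree_le_iff_coeff_eq_zero]
    intro N hN
    rw [hGdef, Polynomial.coeff_reflect, Polynomial.revAt_eq_self_of_lt hN]
    exact Polynomial.coeff_eq_zero_of_natDegree_lt (by omega)
  -- sign lemma
  have hsign : ∀ k, k ≤ m + 1 → ((-1 : ℂ)) ^ (m + 1) * (-1) ^ (m + 1 - k) = (-1) ^ k := by
    intro k hk
    have h1 : ((-1 : ℂ)) ^ (m + 1) = (-1) ^ (m + 1 - k) * (-1) ^ k := by
      rw [← pow_add]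
      congr 1
      omega
    rw [h1]
    have h2 : ((-1 : ℂ)) ^ (m + 1 - k) * (-1) ^ (m + 1 - k) = 1 := by
      rw [← pow_add, ← two_mul, pow_mul]
      norm_num
    calc ((-1 : ℂ)) ^ (m + 1 - k) * (-1) ^ k * (-1) ^ (m + 1 - k)
        = ((-1 : ℂ)) ^ (m + 1 - k) * (-1) ^ (m + 1 - k) * (-1) ^ k := by ring
      _ = (-1) ^ k := by rw [h2, one_mul]
  -- coefficients of h
  have hhcoeff : ∀ k, k ≤ m + 1 →
      h.coeff (m + 1 - k) = (-1) ^ k * (E k - p * (starRingEnd ℂ) (E (m + 1 - k))) := by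
    intro k hk
    rw [hhdef, Polynomial.coeff_sub, Polynomial.coeff_C_mul, hgcoeff k hk, hGcoeff k hk,
      hgdcoeff k hk, hcdef]
    have := hsign k hk
    calc (-1 : ℂ) ^ k * E k -
          (-1) ^ (m + 1) * p * ((-1) ^ (m + 1 - k) * (starRingEnd ℂ) (E (m + 1 - k)))
        = (-1 : ℂ) ^ k * E k -
          ((-1) ^ (m + 1) * (-1) ^ (m + 1 - k)) * (p * (starRingEnd ℂ) (E (m + 1 - k))) := by
          ring
      _ = (-1) ^ k * (E k - p * (starRingEnd ℂ) (E (m + 1 - k))) := by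
          rw [this]; ring
  have hhtop : h.coeff (m + 1) = u := by
    have := hhcoeff 0 (by omega)
    simp only [Nat.sub_zero] at this
    rw [this, hE0, hpdef]
    ring
  have hne : h ≠ 0 := fun hcontra => hu (by rw [← hhtop, hcontra, Polynomial.coeff_zero])
  have hhdeg : h.natDegree = m + 1 := by
    refine le_antisymm ?_ (Polynomial.le_natDegree_of_ne_zero (by rw [hhtop]; exact hu))
    refine le_trans (Polynomial.natDegree_sub_le _ _) ?_
    rw [max_le_iff]
    constructor
    · rw [hgdeg]
    · exact le_trans (Polynomial.natDegree_C_mul_le _ _) hGdeg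
  -- product form of G, evals
  have hGprod : G = ∏ j : Fin (m + 1),
      (1 - Polynomial.C ((starRingEnd ℂ) (z j)) * Polynomial.X) := by
    have h2 := reflect_prod_lin (univ : Finset (Fin (m + 1))) fun j => (starRingEnd ℂ) (z j)
    rw [show (univ : Finset (Fin (m + 1))).card = m + 1 by simp] at h2
    rw [hGdef, hgddef]
    exact h2
  have hgeval : ∀ t : ℂ, g.eval t = ∏ j, (t - z j) := by
    intro t
    rw [hgdef]
    simp [Polynomial.eval_prod]
  have hGeval : ∀ t : ℂ, G.eval t = ∏ j, (1 - (starRingEnd ℂ) (z j) * t) := by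
    intro t
    rw [hGprod]
    simp [Polynomial.eval_prod]
  -- roots of h have modulus < 1
  have hroot_lt : ∀ t : ℂ, h.eval t = 0 → ‖t‖ < 1 := by
    intro t ht
    by_contra hcon
    push_neg at hcon
    have hgpos : 0 < ‖g.eval t‖ := by
      rw [hgeval, norm_prod]
      refine Finset.prod_pos fun j _ => ?_
      have : t ≠ z j := fun hEq => by
        rw [hEq] at hcon
        exact absurd (hz j) (not_lt.mpr hcon)
      exact norm_pos_iff.mpr (sub_ne_zero.mpr this)
    have hGle : ‖G.eval t‖ ≤ ‖g.eval t‖ := by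
      rw [hgeval, hGeval, norm_prod, norm_prod]
      refine Finset.prod_le_prod (fun j _ => norm_nonneg _) fun j _ =>
        abs_one_sub_conj_mul_le_s5 (hz j) hcon
    have habsc : ‖c‖ = ‖p‖ := by
      rw [hcdef, norm_mul, norm_pow]
      simp
    have heq : g.eval t = c * G.eval t := by
      have h' : g.eval t - c * G.eval t = 0 := by
        rw [← ht, hhdef]
        simp
      exact sub_eq_zero.mp h'

    have : ‖g.eval t‖ = ‖c‖ * ‖G.eval t‖ := by
      rw [heq, norm_mul]
    rw [habsc] at this
    nlinarith [norm_nonneg (G.eval t), norm_nonneg p]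
  -- h(0) = 0
  have hh0 : h.eval 0 = 0 := by
    have hg0 : g.eval 0 = (-1) ^ (m + 1) * p := by
      rw [hgeval]
      have : ∀ j : Fin (m + 1), (0 : ℂ) - z j = (-1) * z j := by intro j; ring
      rw [Finset.prod_congr rfl fun j _ => this j, Finset.prod_mul_distrib,
        Finset.prod_const, hEtop]
      simp
    have hG0 : G.eval 0 = 1 := by
      rw [hGeval]
      simp
    rw [hhdef]
    simp [hg0, hG0, hcdef]
  -- factor h over its roots
  have hsplits : h.Splits := IsAlgClosed.splits h
  have hcardroots : Multiset.card h.roots = m + 1 := by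
    rw [Polynomial.splits_iff_card_roots.mp hsplits, hhdeg]
  have hmem0 : (0 : ℂ) ∈ h.roots := by
    rw [Polynomial.mem_roots']
    exact ⟨hne, hh0⟩
  obtain ⟨R', hR'⟩ := Multiset.exists_cons_of_mem hmem0
  have hcardR' : Multiset.card R' = m := by
    have := hcardroots
    rw [hR', Multiset.card_cons] at this
    omega
  have hlead : h.leadingCoeff = u := by
    rw [Polynomial.leadingCoeff, hhdeg, hhtop]
  have hfact : h = Polynomial.C u *
      (Polynomial.X * (Multiset.map (fun a => Polynomial.X - Polynomial.C a) R').prod) := by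
    have := Polynomial.Splits.eq_prod_roots hsplits
    rw [hlead, hR', Multiset.map_cons, Multiset.prod_cons] at this
    simpa using this
  set P' : Polynomial ℂ := (Multiset.map (fun a => Polynomial.X - Polynomial.C a) R').prod
    with hP'def
  -- elementary symmetric functions of R'
  have hesymmR' : ∀ k, 1 ≤ k → k ≤ m →
      u * R'.esymm k = E k - p * (starRingEnd ℂ) (E (m + 1 - k)) := by
    intro k hk1 hk2
    have hidx : m + 1 - k = (m - k) + 1 := by omega
    have hcoeff1 : h.coeff (m + 1 - k) = u * P'.coeff (m - k) := by
      rw [hfact, Polynomial.coeff_C_mul, hidx, Polynomial.coeff_X_mul]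
    have hle : m - k ≤ Multiset.card R' := by omega
    have hcoeff2 : P'.coeff (m - k) = (-1) ^ k * R'.esymm k := by
      rw [hP'def, Multiset.prod_X_sub_C_coeff _ hle, hcardR']
      have : m - (m - k) = k := by omega
      rw [this]
    have hpow : ((-1 : ℂ)) ^ k ≠ 0 := pow_ne_zero _ (by norm_num)
    have hmain : (-1 : ℂ) ^ k * (u * R'.esymm k) =
        (-1 : ℂ) ^ k * (E k - p * (starRingEnd ℂ) (E (m + 1 - k))) := by
      rw [← hhcoeff k (by omega), hcoeff1, hcoeff2]
      ring
    exact mul_left_cancel₀ hpow hmain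
  have hR'lt : ∀ a ∈ R', ‖a‖ < 1 := by
    intro a ha
    have : a ∈ h.roots := by
      rw [hR']
      exact Multiset.mem_cons_of_mem ha
    rw [Polynomial.mem_roots'] at this
    exact hroot_lt a this.2
  -- build the witness tuple
  obtain ⟨l, hl⟩ : ∃ l : List ℂ, (l : Multiset ℂ) = R' := ⟨R'.toList, Multiset.coe_toList R'⟩
  have hllen : l.length = m := by
    rw [← hcardR', ← hl]
    simp
  subst hllen
  clear_value P' h c G gd g u p E
  refine ⟨?_, ?_⟩
  · show ‖symMap (l.length + 1) z (Fin.last l.length)‖ < 1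
    have : symMap (l.length + 1) z (Fin.last l.length) = p := by
      rw [hpdef, hEdef]
      rfl
    rw [this]
    exact hp
  · have huniv : Multiset.map l.get (univ : Finset (Fin l.length)).val = R' := by
      rw [Fin.univ_val_map, List.ofFn_get]
      exact hl
    refine ⟨l.get, fun j => ?_, funext fun i => ?_⟩
    · apply hR'lt
      rw [← hl]
      exact Multiset.mem_coe.mpr (List.get_mem l j)
    · have hk2 : i.1 + 1 ≤ l.length := i.isLt
      have hEs := hesymmR' (i.1 + 1) (by omega) (by omega)
      have hLHS : symMap l.length l.get i = R'.esymm (i.1 + 1) := by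
        show esymC l.length (i.1 + 1) l.get = _
        have h1 : esymC l.length (i.1 + 1) l.get =
            (Multiset.map l.get (univ : Finset (Fin l.length)).val).esymm (i.1 + 1) := by
          rw [Finset.esymm_map_val]
          rfl
        rw [h1, huniv]
      have hx1 : symMap (l.length + 1) z i.castSucc = E (i.1 + 1) := by
        rw [hEdef]
        rfl
      have hx2 : symMap (l.length + 1) z i.rev.castSucc = E (l.length - i.1) := by
        rw [hEdef]
        show esymC (l.length + 1) (i.rev.castSucc.1 + 1) z = esymC (l.length + 1) (l.length - i.1) z
        congr 1
        have : i.rev.castSucc.1 = i.rev.1 := rfl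
        rw [this, Fin.val_rev]
        omega
      have hx3 : symMap (l.length + 1) z (Fin.last l.length) = p := by
        rw [hpdef, hEdef]
        rfl
      have hden : 1 - ((‖p‖ : ℂ)) ^ 2 = u := by
        rw [hudef]
        congr 1
        rw [← Complex.ofReal_pow, Complex.sq_norm]
        exact (Complex.mul_conj p).symm
      rw [hLHS, hx1, hx2, hx3, hden, eq_div_iff hu]
      have hidx : l.length + 1 - (i.1 + 1) = l.length - i.1 := by omega
      rw [hidx] at hEs
      linear_combination hEs
end
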